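/- Let N ≥ 2 be an integer, let i be an integer with 1 ≤ i ≤ N−1, and let k, ħ, w be real numbers. Define F(x) = x²/((x−ħ)(x+ħ)) and G(x) = ((x−ħ)(x+(k+N+1)ħ)) / ((x+ħ)(x+(k+N−1)ħ)). Assume every denominator occurring below is nonzero. Then [Π_{l=1}^{i−1} F(w+(k/2+l−1)ħ) · F(w+(k/2+l)ħ)] · F(w+(k/2+i−1)ħ) · F(w+(k/2+i)ħ)² · F(w+(k/2+i+1)ħ) · [Π_{l=i+2}^{N} F(w+(k/2+l−1)ħ) · F(w+(k/2+l)ħ)] · G(w − kħ/2) = ((w − kħ/2 − ħ)(w + kħ/2 + ħ)) / ((w − kħ/2 + ħ)(w + kħ/2 − ħ)). -/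

import Mathlib

set_option maxHeartbeats 1000000

lemma tele9 (k ℏ w : ℝ) (F : ℝ → ℝ)
    (hF : ∀ x, F x = x ^ 2 / ((x - ℏ) * (x + ℏ))) (m : ℕ) (d : ℕ) :
    (∀ j : ℤ, (m:ℤ) - 1 ≤ j → j ≤ (m:ℤ) + d + 1 → w + (k/2 + (j:ℝ)) * ℏ ≠ 0) →
    ∏ l ∈ Finset.Icc (m+1) (m+d),
        F (w + (k / 2 + l - 1) * ℏ) * F (w + (k / 2 + l) * ℏ)
      = ((w + (k/2 + ((m:ℝ) + d) - 1) * ℏ) * (w + (k/2 + ((m:ℝ) + 1)) * ℏ)) /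
        ((w + (k/2 + ((m:ℝ) - 1)) * ℏ) * (w + (k/2 + ((m:ℝ) + d + 1)) * ℏ)) := by
  induction d with
  | zero =>
    intro h
    have h1 : w + (k/2 + ((m:ℝ) - 1)) * ℏ ≠ 0 := fun hc =>
      h ((m:ℤ) - 1) (by omega) (by omega) (by push_cast; linear_combination hc)
    have h2 : w + (k/2 + ((m:ℝ) + 0 + 1)) * ℏ ≠ 0 := fun hc =>
      h ((m:ℤ) + 1) (by omega) (by omega) (by push_cast; linear_combination hc)
    rw [Finset.Icc_eq_empty (by omega), Finset.prod_empty]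
    symm
    rw [div_eq_one_iff_eq (by push_cast; exact mul_ne_zero h1 h2)]
    push_cast; ring
  | succ d ih =>
    intro h
    rw [show m + (d+1) = (m+d)+1 from rfl,
        Finset.prod_Icc_succ_top (by omega : m+1 ≤ m+d+1),
        ih (fun j hj1 hj2 => h j hj1 (by omega)), hF, hF]
    have h1 : w + (k/2 + ((m:ℝ) - 1)) * ℏ ≠ 0 := fun hc =>
      h ((m:ℤ) - 1) (by omega) (by omega) (by push_cast; linear_combination hc)
    have h2 : w + (k/2 + ((m:ℝ) + d) - 1) * ℏ ≠ 0 := fun hc =>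
      h ((m:ℤ) + d - 1) (by omega) (by omega) (by push_cast; linear_combination hc)
    have h3 : w + (k/2 + ((m:ℝ) + d)) * ℏ ≠ 0 := fun hc =>
      h ((m:ℤ) + d) (by omega) (by omega) (by push_cast; linear_combination hc)
    have h4 : w + (k/2 + ((m:ℝ) + d + 1)) * ℏ ≠ 0 := fun hc =>
      h ((m:ℤ) + d + 1) (by omega) (by omega) (by push_cast; linear_combination hc)
    have h5 : w + (k/2 + ((m:ℝ) + d + 2)) * ℏ ≠ 0 := fun hc =>
      h ((m:ℤ) + d + 2) (by omega) (by omega) (by push_cast; linear_combination hc)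
    push_cast
    have e1 : w + (k / 2 + (↑m + ↑d + 1) - 1) * ℏ - ℏ = w + (k/2 + ((m:ℝ) + d) - 1) * ℏ := by ring
    have e2 : w + (k / 2 + (↑m + ↑d + 1) - 1) * ℏ + ℏ = w + (k/2 + ((m:ℝ) + d + 1)) * ℏ := by ring
    have e3 : w + (k / 2 + (↑m + ↑d + 1)) * ℏ - ℏ = w + (k/2 + ((m:ℝ) + d)) * ℏ := by ring
    have e4 : w + (k / 2 + (↑m + ↑d + 1)) * ℏ + ℏ = w + (k/2 + ((m:ℝ) + d + 2)) * ℏ := by ring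
    have e5 : w + (k / 2 + (↑m + (↑d + 1)) - 1) * ℏ = w + (k/2 + ((m:ℝ) + d)) * ℏ := by ring
    have e6 : w + (k / 2 + (↑m + (↑d + 1) + 1)) * ℏ = w + (k/2 + ((m:ℝ) + d + 2)) * ℏ := by ring
    have e7 : w + (k / 2 + (↑m + ↑d + 1) - 1) * ℏ = w + (k/2 + ((m:ℝ) + d)) * ℏ := by ring
    rw [e1, e2, e3, e4, e7, e5, e6]
    generalize hP : w + (k/2 + ((m:ℝ) - 1)) * ℏ = P at h1 ⊢
    generalize hQ : w + (k/2 + ((m:ℝ) + d) - 1) * ℏ = Q at h2 ⊢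
    generalize hR : w + (k/2 + ((m:ℝ) + d)) * ℏ = R at h3 ⊢
    generalize hS : w + (k/2 + ((m:ℝ) + d + 1)) * ℏ = S at h4 ⊢
    generalize hT : w + (k/2 + ((m:ℝ) + d + 2)) * ℏ = T at h5 ⊢
    field_simp


/-- the scalar verification of the diagonal `H⁺–H⁻` exchange
relation for the level-`k` bosonization of `DY_ℏ(sl_N)`: with
`F x = x²/((x-ℏ)(x+ℏ))` and
`G x = ((x-ℏ)(x+(k+N+1)ℏ)) / ((x+ℏ)(x+(k+N-1)ℏ))`, assuming all occurring
denominators are nonzero, the indicated product of exchange factors equals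
`((w - kℏ/2 - ℏ)(w + kℏ/2 + ℏ)) / ((w - kℏ/2 + ℏ)(w + kℏ/2 - ℏ))`. -/
theorem statement9 (N i : ℕ) (hN : 2 ≤ N) (hi1 : 1 ≤ i) (hi2 : i ≤ N - 1)
    (k ℏ w : ℝ) (F G : ℝ → ℝ)
    (hF : ∀ x, F x = x ^ 2 / ((x - ℏ) * (x + ℏ)))
    (hG : ∀ x, G x = ((x - ℏ) * (x + (k + N + 1) * ℏ)) / ((x + ℏ) * (x + (k + N - 1) * ℏ)))
    (hdenF : ∀ m : ℕ, m ≤ N →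
      w + (k / 2 + m) * ℏ - ℏ ≠ 0 ∧ w + (k / 2 + m) * ℏ + ℏ ≠ 0)
    (hdenG1 : w - k * ℏ / 2 + ℏ ≠ 0)
    (hdenG2 : w - k * ℏ / 2 + (k + N - 1) * ℏ ≠ 0)
    (hdenR : w + k * ℏ / 2 - ℏ ≠ 0) :
    (∏ l ∈ Finset.Icc 1 (i - 1),
        F (w + (k / 2 + l - 1) * ℏ) * F (w + (k / 2 + l) * ℏ)) *
      F (w + (k / 2 + i - 1) * ℏ) * F (w + (k / 2 + i) * ℏ) ^ 2 *
      F (w + (k / 2 + i + 1) * ℏ) *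
      (∏ l ∈ Finset.Icc (i + 2) N,
        F (w + (k / 2 + l - 1) * ℏ) * F (w + (k / 2 + l) * ℏ)) *
      G (w - k * ℏ / 2)
    = ((w - k * ℏ / 2 - ℏ) * (w + k * ℏ / 2 + ℏ)) /
        ((w - k * ℏ / 2 + ℏ) * (w + k * ℏ / 2 - ℏ)) := by
  have key : ∀ j : ℤ, -1 ≤ j → j ≤ (N:ℤ)+1 → w + (k/2 + (j:ℝ))*ℏ ≠ 0 := by
    intro j hj1 hj2 hc
    by_cases hcase : j ≤ (N:ℤ) - 1
    · refine (hdenF (j+1).toNat (by omega)).1 ?_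
      have h0 : (((j+1).toNat : ℕ) : ℤ) = j + 1 := Int.toNat_of_nonneg (by omega)
      have hcast : (((j+1).toNat : ℕ) : ℝ) = (j:ℝ) + 1 := by
        exact_mod_cast congrArg (fun z : ℤ => (z : ℝ)) h0
      rw [hcast]; linear_combination hc
    · refine (hdenF (j-1).toNat (by omega)).2 ?_
      have h0 : (((j-1).toNat : ℕ) : ℤ) = j - 1 := Int.toNat_of_nonneg (by omega)
      have hcast : (((j-1).toNat : ℕ) : ℝ) = (j:ℝ) - 1 := by
        exact_mod_cast congrArg (fun z : ℤ => (z : ℝ)) h0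
      rw [hcast]; linear_combination hc
  have P1 := tele9 k ℏ w F hF 0 (i-1)
    (fun j hj1 hj2 => key j (by omega) (by omega))
  have P2 := tele9 k ℏ w F hF (i+1) (N-i-1)
    (fun j hj1 hj2 => key j (by omega) (by omega))
  rw [show (0:ℕ)+1 = 1 from rfl, show 0+(i-1) = i-1 by omega] at P1
  rw [show (i+1)+1 = i+2 from rfl, show i+1+(N-i-1) = N by omega] at P2
  have ci : ((i-1 : ℕ) : ℝ) = (i:ℝ) - 1 := by
    push_cast [Nat.cast_sub hi1]; ring
  have cN : ((N-i-1 : ℕ) : ℝ) = (N:ℝ) - i - 1 := by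
    have h' : N - i - 1 = N - (i+1) := by omega
    rw [h', Nat.cast_sub (by omega : i+1 ≤ N)]; push_cast; ring
  rw [ci] at P1
  rw [cN] at P2
  norm_num at P1 P2
  rw [P1, P2]
  simp only [hF, hG]
  have e1 : w + (k / 2 + (i:ℝ) - 1) * ℏ - ℏ = w + (k / 2 + ((i:ℝ) - 1) - 1) * ℏ := by ring
  have e2 : w + (k / 2 + (i:ℝ) - 1) * ℏ + ℏ = w + (k / 2 + (i:ℝ)) * ℏ := by ring
  have e3 : w + (k / 2 + (i:ℝ)) * ℏ - ℏ = w + (k / 2 + (i:ℝ) - 1) * ℏ := by ring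
  have e4 : w + (k / 2 + (i:ℝ)) * ℏ + ℏ = w + (k / 2 + (i:ℝ) + 1) * ℏ := by ring
  have e5 : w + (k / 2 + (i:ℝ) + 1) * ℏ - ℏ = w + (k / 2 + (i:ℝ)) * ℏ := by ring
  have e6 : w + (k / 2 + (i:ℝ) + 1) * ℏ + ℏ = w + (k / 2 + ((i:ℝ) + 1 + 1)) * ℏ := by ring
  have e7 : w - k * ℏ / 2 + (k + (N:ℝ) + 1) * ℏ = w + (k / 2 + ((N:ℝ) + 1)) * ℏ := by ring
  have e8 : w - k * ℏ / 2 + (k + (N:ℝ) - 1) * ℏ = w + (k / 2 + (N:ℝ) - 1) * ℏ := by ring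
  have e9 : w + k * ℏ / 2 + ℏ = w + (k / 2 + 1) * ℏ := by ring
  have e10 : w + k * ℏ / 2 - ℏ = w + (k / 2 + -1) * ℏ := by ring
  rw [e1, e2, e3, e4, e5, e6, e7, e8, e9, e10]
  have n1 : w + (k / 2 + ((i:ℝ) - 1) - 1) * ℏ ≠ 0 := fun hc =>
    key ((i:ℤ)-2) (by omega) (by omega) (by push_cast; linear_combination hc)
  have n2 : w + (k / 2 + (i:ℝ) - 1) * ℏ ≠ 0 := fun hc =>
    key ((i:ℤ)-1) (by omega) (by omega) (by push_cast; linear_combination hc)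
  have n3 : w + (k / 2 + (i:ℝ)) * ℏ ≠ 0 := fun hc =>
    key (i:ℤ) (by omega) (by omega) (by push_cast; linear_combination hc)
  have n4 : w + (k / 2 + (i:ℝ) + 1) * ℏ ≠ 0 := fun hc =>
    key ((i:ℤ)+1) (by omega) (by omega) (by push_cast; linear_combination hc)
  have n5 : w + (k / 2 + ((i:ℝ) + 1 + 1)) * ℏ ≠ 0 := fun hc =>
    key ((i:ℤ)+2) (by omega) (by omega) (by push_cast; linear_combination hc)
  have n6 : w + (k / 2 + 1) * ℏ ≠ 0 := fun hc =>
    key 1 (by omega) (by omega) (by push_cast; linear_combination hc)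
  have n7 : w + (k / 2 + -1) * ℏ ≠ 0 := fun hc =>
    key (-1) (by omega) (by omega) (by push_cast; linear_combination hc)
  have n8 : w + (k / 2 + (N:ℝ) - 1) * ℏ ≠ 0 := fun hc =>
    key ((N:ℤ)-1) (by omega) (by omega) (by push_cast; linear_combination hc)
  have n9 : w + (k / 2 + ((N:ℝ) + 1)) * ℏ ≠ 0 := fun hc =>
    key ((N:ℤ)+1) (by omega) (by omega) (by push_cast; linear_combination hc)
  generalize hA1 : w + (k / 2 + ((i:ℝ) - 1) - 1) * ℏ = A1 at n1 ⊢
  generalize hA2 : w + (k / 2 + (i:ℝ) - 1) * ℏ = A2 at n2 ⊢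
  generalize hA3 : w + (k / 2 + (i:ℝ)) * ℏ = A3 at n3 ⊢
  generalize hA4 : w + (k / 2 + (i:ℝ) + 1) * ℏ = A4 at n4 ⊢
  generalize hA5 : w + (k / 2 + ((i:ℝ) + 1 + 1)) * ℏ = A5 at n5 ⊢
  generalize hA6 : w + (k / 2 + 1) * ℏ = A6 at n6 ⊢
  generalize hA7 : w + (k / 2 + -1) * ℏ = A7 at n7 ⊢
  generalize hA8 : w + (k / 2 + (N:ℝ) - 1) * ℏ = A8 at n8 ⊢
  generalize hA9 : w + (k / 2 + ((N:ℝ) + 1)) * ℏ = A9 at n9 ⊢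
  generalize hG1 : w - k * ℏ / 2 - ℏ = G1
  generalize hG2 : w - k * ℏ / 2 + ℏ = G2 at hdenG1 ⊢
  field_simp
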